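/- For every valid operation list ops : List (Option α), the sequence of dequeued values is an initial segment of the sequence of enqueued values: dequeuedRun ops is a prefix of enqueuedRun ops, where enqueuedRun ops is the list of the values a of the `some a` operations of ops, in order of occurrence. In particular, for every d, the d-th dequeue operation removes exactly the value inserted by the d-th enqueue operation, so a value enqueued strictly earlier is dequeued strictly earlier. -/

import Mathlib

/-- One step of FIFO queue execution: `some a` enqueues `a` at the back,
`none` dequeues the front element (tail of the empty list is empty). -/
def queueStep {α : Type*} (s : List α) : Option α → List α
  | some a => s ++ [a]
  | none => s.tail

/-- The final queue state after executing the operation list `ops`,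
starting from the empty queue. -/
def queueRun {α : Type*} (ops : List (Option α)) : List α :=
  ops.foldl queueStep []

/-- An operation list is valid when no dequeue is performed on an empty queue:
for every prefix ending in `none`, the queue state just before that `none`
is nonempty. -/
def queueValid {α : Type*} (ops : List (Option α)) : Prop :=
  ∀ pre : List (Option α), pre ++ [none] <+: ops → queueRun pre ≠ []

/-- The values dequeued by the `none` operations, starting from queue state `s`,
in order of occurrence. -/
def dequeuedAux {α : Type*} : List α → List (Option α) → List α
  | _, [] => []
  | s, some a :: ops => dequeuedAux (s ++ [a]) ops
  | s, none :: ops => s.take 1 ++ dequeuedAux s.tail ops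

/-- The sequence of values dequeued while executing `ops` from the empty queue. -/
def dequeuedRun {α : Type*} (ops : List (Option α)) : List α :=
  dequeuedAux [] ops

/-- The values enqueued by the `some` operations of `ops`, in order of occurrence. -/
def enqueuedRun {α : Type*} (ops : List (Option α)) : List α :=
  ops.filterMap id

/-- FIFO property: for a valid operation list, the sequence of dequeued values
is an initial segment of the sequence of enqueued values, so the `d`-th dequeue
removes exactly the value inserted by the `d`-th enqueue. -/
theorem dequeuedRun_isPrefix_enqueuedRun {α : Type*} (ops : List (Option α))
    (hvalid : queueValid ops) :
    dequeuedRun ops <+: enqueuedRun ops := by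
  have key : ∀ (ops : List (Option α)) (s : List α),
      (∀ pre : List (Option α), pre ++ [none] <+: ops →
        pre.foldl queueStep s ≠ []) →
      s ++ ops.filterMap id = dequeuedAux s ops ++ ops.foldl queueStep s := by
    intro ops
    induction ops with
    | nil => intro s _; simp [dequeuedAux]
    | cons o ops ih =>
      intro s hv
      cases o with
      | some a =>
        have h := ih (s ++ [a]) (fun pre hpre => by
          have := hv (some a :: pre) (by
            obtain ⟨t, ht⟩ := hpre; exact ⟨t, by simp [← ht]⟩)
          simpa [List.foldl, queueStep] using this)
        simpa [dequeuedAux, List.filterMap, List.foldl, queueStep] using h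
      | none =>
        have hne : s ≠ [] := by
          simpa [queueStep] using hv [] ⟨ops, by simp⟩
        obtain ⟨x, t, rfl⟩ := List.exists_cons_of_ne_nil hne
        have h := ih t (fun pre hpre => by
          have := hv (none :: pre) (by obtain ⟨t, ht⟩ := hpre; exact ⟨t, by simp [← ht]⟩)
          simpa [List.foldl, queueStep] using this)
        simpa [dequeuedAux, List.filterMap, List.foldl, queueStep] using h
  have h := key ops [] (fun pre hpre => hvalid pre hpre)
  exact ⟨ops.foldl queueStep [], by
    simpa [dequeuedRun, enqueuedRun, queueRun] using h.symm⟩
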